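/- In a quad code of length 7 (subspace of Z_2^7, all codewords even weight, minimum nonzero weight ≥ 4), there is at most one codeword of weight 6. -/

import Mathlib

open Finset

lemma card_compl_supp (c : Fin 7 → ZMod 2) (h : hammingNorm c = 6) :
    ({i | c i = 0} : Finset (Fin 7)).card = 1 := by
  have hc : (({i | c i ≠ 0} : Finset (Fin 7))).card = 6 := h
  have heq : ({i | c i = 0} : Finset (Fin 7)) = ({i | c i ≠ 0} : Finset (Fin 7))ᶜ := by
    ext i; simp
  rw [heq, card_compl, hc]
  rfl

/-- A quad code of length 7 contains at most one codeword of weight 6. -/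
theorem length_seven_at_most_one_weight_six
    (C : Submodule (ZMod 2) (Fin 7 → ZMod 2))
    (heven : ∀ c ∈ C, Even (hammingNorm c))
    (hmin : ∀ c ∈ C, c ≠ 0 → 4 ≤ hammingNorm c) :
    ∀ c ∈ C, ∀ d ∈ C, hammingNorm c = 6 → hammingNorm d = 6 → c = d := by
  intro c hc d hd hc6 hd6
  have hsub : c - d ∈ C := C.sub_mem hc hd
  have hone : ∀ x : ZMod 2, x ≠ 0 → x = 1 := by decide
  have hle : hammingNorm (c - d) ≤ 2 := by
    rw [show hammingNorm (c - d) = hammingDist c d by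
      simp_rw [hammingNorm, hammingDist, Pi.sub_apply, ne_eq, sub_eq_zero]]
    have hsubset : ({i | c i ≠ d i} : Finset (Fin 7)) ⊆
        ({i | c i = 0} : Finset (Fin 7)) ∪ ({i | d i = 0} : Finset (Fin 7)) := by
      intro i hi
      simp only [mem_filter, mem_univ, true_and] at hi
      simp only [mem_union, mem_filter, mem_univ, true_and]
      by_contra h
      push_neg at h
      obtain ⟨h1, h2⟩ := h
      exact hi ((hone _ h1).trans (hone _ h2).symm)
    calc hammingDist c d
        = (({i | c i ≠ d i} : Finset (Fin 7))).card := rfl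
      _ ≤ (({i | c i = 0} : Finset (Fin 7)) ∪ ({i | d i = 0} : Finset (Fin 7))).card :=
          card_le_card hsubset
      _ ≤ ({i | c i = 0} : Finset (Fin 7)).card + ({i | d i = 0} : Finset (Fin 7)).card :=
          card_union_le _ _
      _ ≤ 2 := by rw [card_compl_supp c hc6, card_compl_supp d hd6]
  by_contra hne
  have hne0 : c - d ≠ 0 := sub_ne_zero_of_ne hne
  have := hmin _ hsub hne0
  omega
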